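/- If x is a positive element of a Garside group G (i.e., x lies in the Garside monoid M) with length-preserving relations, then ℓ_G(x) = ℓ_R(x) = ℓ(x); and if x⁻¹ ∈ M then ℓ_R(x) = ℓ(x). -/

import Mathlib

/-- Minimal length of `x` as a word in the alphabet `A ∪ A⁻¹`. -/
noncomputable def minLen {G : Type*} [Group G] (A : Set G) (x : G) : ℕ :=
  sInf {n | ∃ L : List G, (∀ g ∈ L, g ∈ A ∨ g⁻¹ ∈ A) ∧ L.prod = x ∧ L.length = n}

section Aux
variable {G : Type*} [Group G] {A : Set G} {M : Submonoid G}

lemma minLen_set_nonempty (hgen : Submonoid.closure A = M) {x : G} (hx : x ∈ M) :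
    {n | ∃ L : List G, (∀ g ∈ L, g ∈ A ∨ g⁻¹ ∈ A) ∧ L.prod = x ∧ L.length = n}.Nonempty := by
  rw [← hgen] at hx
  induction hx using Submonoid.closure_induction with
  | mem g hg => exact ⟨1, [g], by intro h hh; simp at hh; exact hh ▸ Or.inl hg, by simp, rfl⟩
  | one => exact ⟨0, [], by simp, by simp, rfl⟩
  | mul a b _ _ ha hb =>
    obtain ⟨m, L1, h1, hp1, hl1⟩ := ha
    obtain ⟨n, L2, h2, hp2, hl2⟩ := hb
    refine ⟨m + n, L1 ++ L2, ?_, by simp [hp1, hp2], by simp [hl1, hl2]⟩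
    intro g hg
    rcases List.mem_append.1 hg with h | h
    exacts [h1 g h, h2 g h]

lemma minLen_spec (hgen : Submonoid.closure A = M) {x : G} (hx : x ∈ M) :
    ∃ L : List G, (∀ g ∈ L, g ∈ A ∨ g⁻¹ ∈ A) ∧ L.prod = x ∧ L.length = minLen A x :=
  Nat.sInf_mem (minLen_set_nonempty hgen hx)

lemma minLen_one : minLen A (1 : G) = 0 :=
  Nat.sInf_eq_zero.2 (Or.inl ⟨[], by simp, by simp, rfl⟩)

lemma eq_one_of_minLen_zero (hgen : Submonoid.closure A = M) {x : G} (hx : x ∈ M)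
    (h0 : minLen A x = 0) : x = 1 := by
  obtain ⟨L, _, hp, hl⟩ := minLen_spec hgen hx
  rw [h0, List.length_eq_zero_iff] at hl
  rw [← hp, hl, List.prod_nil]

lemma minLen_inv_aux (x : G) (n : ℕ)
    (h : ∃ L : List G, (∀ g ∈ L, g ∈ A ∨ g⁻¹ ∈ A) ∧ L.prod = x ∧ L.length = n) :
    ∃ L : List G, (∀ g ∈ L, g ∈ A ∨ g⁻¹ ∈ A) ∧ L.prod = x⁻¹ ∧ L.length = n := by
  obtain ⟨L, hm, hp, hl⟩ := h
  refine ⟨(L.map fun g => g⁻¹).reverse, ?_, ?_, by simp [hl]⟩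
  · intro g hg
    simp only [List.mem_reverse, List.mem_map] at hg
    obtain ⟨h, hh, rfl⟩ := hg
    rcases hm h hh with h1 | h1
    · exact Or.inr (by simpa using h1)
    · exact Or.inl h1
  · rw [← List.prod_inv_reverse, hp]

lemma minLen_inv (x : G) : minLen A x⁻¹ = minLen A x := by
  unfold minLen
  congr 1
  ext n
  exact ⟨fun h => by simpa using minLen_inv_aux (A := A) x⁻¹ n h, minLen_inv_aux x n⟩

end Aux

/-- Let `G` be the group of fractions of a Garside monoid `M` with
length-preserving relations, atom set `A`, and fundamental element `δ`.  For every
`x ∈ G`: if `x` is positive (`x ∈ M`) then `ℓ_G(x) = ℓ_R(x) = ℓ(x)`, and if `x⁻¹ ∈ M`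
then `ℓ_R(x) = ℓ(x)`, where `ℓ = minLen A` is the minimal length over the atoms and
their inverses. -/
theorem lengths_of_positive_elements {G : Type*} [Group G]
    (M : Submonoid G) (A : Set G) (δ : G) (simple : G → Prop)
    (wedge : G → G → G) (ℓG ℓR : G → ℕ)
    -- M is generated by the atoms, and the relations are length preserving
    (hgen : Submonoid.closure A = M)
    (hadd : ∀ a ∈ M, ∀ b ∈ M, minLen A (a * b) = minLen A a + minLen A b)
    -- simple elements: positive, left-dividing δ, with simple complements
    (hatom_simple : ∀ a ∈ A, simple a)
    (hsimple_pos : ∀ s : G, simple s → s ∈ M)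
    (hδ_simple : simple δ)
    (hcompl : ∀ s : G, simple s → ∃ c : G, simple c ∧ s * c = δ)
    (hcompl' : ∀ s : G, simple s → ∃ c : G, simple c ∧ c * s = δ)
    -- `wedge` is the left gcd on positive elements
    (hwedge : ∀ a ∈ M, ∀ b ∈ M, wedge a b ∈ M ∧
      (∃ c ∈ M, wedge a b * c = a) ∧ (∃ c ∈ M, wedge a b * c = b) ∧
      ∀ d ∈ M, (∃ c ∈ M, d * c = a) → (∃ c ∈ M, d * c = b) →
        ∃ c ∈ M, d * c = wedge a b)
    -- greedy normal form `x = δ^k p₁⋯p_r` and the greedy length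
    (hG : ∀ x : G, ∃ (k : ℤ) (P : List G),
      (∀ p ∈ P, simple p ∧ p ≠ δ ∧ p ≠ 1) ∧
      List.Chain' (fun a b => wedge (a⁻¹ * δ) b = 1) P ∧
      x = δ ^ k * P.prod ∧
      ℓG x = k.natAbs * minLen A δ + (P.map (minLen A)).sum)
    -- rational normal form `x = (s₁⋯s_k)⁻¹(p₁⋯p_l)` and the rational length
    (hR : ∀ x : G, ∃ U V : List G,
      (∀ s ∈ U ++ V, simple s ∧ s ≠ 1) ∧
      List.Chain' (fun a b => wedge (a⁻¹ * δ) b = 1) U ∧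
      List.Chain' (fun a b => wedge (a⁻¹ * δ) b = 1) V ∧
      wedge U.prod V.prod = 1 ∧
      x = U.prod⁻¹ * V.prod ∧
      ℓR x = ((U ++ V).map (minLen A)).sum) :
    ∀ x : G, (x ∈ M → ℓG x = minLen A x ∧ ℓR x = minLen A x) ∧
      (x⁻¹ ∈ M → ℓR x = minLen A x) := by
  have hδM : δ ∈ M := hsimple_pos δ hδ_simple
  -- if c * d = 1 with c, d ∈ M then c = 1 and d = 1
  have hmul1 : ∀ c ∈ M, ∀ d ∈ M, c * d = 1 → c = 1 ∧ d = 1 := by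
    intro c hc d hd hcd
    have h := hadd c hc d hd
    rw [hcd, minLen_one] at h
    exact ⟨eq_one_of_minLen_zero hgen hc (by omega),
      eq_one_of_minLen_zero hgen hd (by omega)⟩
  -- sums over lists of elements of M
  have hsum : ∀ L : List G, (∀ p ∈ L, p ∈ M) →
      L.prod ∈ M ∧ minLen A L.prod = (L.map (minLen A)).sum := by
    intro L
    induction L with
    | nil =>
      intro _
      exact ⟨by simpa using M.one_mem, by simpa using (minLen_one (A := A) (G := G))⟩
    | cons p L ih =>
      intro hL
      have hp : p ∈ M := hL p (List.mem_cons_self)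
      obtain ⟨hLM, hLs⟩ := ih (fun q hq => hL q (List.mem_cons_of_mem _ hq))
      refine ⟨by simpa using M.mul_mem hp hLM, ?_⟩
      rw [List.prod_cons, hadd p hp L.prod hLM, hLs]
      simp
  -- minLen of powers of δ
  have hpow : ∀ n : ℕ, minLen A (δ ^ n) = n * minLen A δ := by
    intro n
    induction n with
    | zero => simpa using (minLen_one : minLen A (1 : G) = 0)
    | succ n ih =>
      rw [pow_succ, hadd _ (M.pow_mem hδM n) _ hδM, ih]
      ring
  -- the main step: if nothing divides both p⁻¹δ and P.prod, then
  -- wedge δ (p·P.prod) = p, and gcd's with simples coprime to p are trivial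
  have step : ∀ p : G, ∀ P : List G, simple p → (∀ q ∈ P, simple q) →
      (∀ e ∈ M, (∃ c ∈ M, e * c = p⁻¹ * δ) → (∃ c ∈ M, e * c = P.prod) → e = 1) →
      wedge δ (p :: P).prod = p ∧
      (∀ s : G, simple s → wedge s p = 1 → wedge s (p :: P).prod = 1) := by
    intro p P hpS hPsimp hcofree
    have hpM : p ∈ M := hsimple_pos p hpS
    have hPM : ∀ q ∈ P, q ∈ M := fun q hq => hsimple_pos q (hPsimp q hq)
    have hPprodM : P.prod ∈ M := (hsum P hPM).1
    have hprodM : (p :: P).prod ∈ M := by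
      rw [List.prod_cons]; exact M.mul_mem hpM hPprodM
    obtain ⟨c, hcS, hpc⟩ := hcompl p hpS
    have hcval : c = p⁻¹ * δ := by
      rw [← hpc, ← mul_assoc, inv_mul_cancel, one_mul]
    obtain ⟨hwM, ⟨c1, hc1M, hc1⟩, ⟨c2, hc2M, hc2⟩, huniv⟩ :=
      hwedge δ hδM (p :: P).prod hprodM
    obtain ⟨e, heM, hpe⟩ := huniv p hpM ⟨c, hsimple_pos c hcS, hpc⟩
      ⟨P.prod, hPprodM, by rw [List.prod_cons]⟩
    have hmain : wedge δ (p :: P).prod = p := by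
      have he1 : e * c1 = p⁻¹ * δ := by
        have : p * (e * c1) = p * (p⁻¹ * δ) := by
          rw [← mul_assoc, hpe, hc1, ← mul_assoc, mul_inv_cancel, one_mul]
        exact mul_left_cancel this
      have he2 : e * c2 = P.prod := by
        have : p * (e * c2) = p * P.prod := by
          rw [← mul_assoc, hpe, hc2, List.prod_cons]
        exact mul_left_cancel this
      have he_one : e = 1 := hcofree e heM ⟨c1, hc1M, he1⟩ ⟨c2, hc2M, he2⟩
      rw [← hpe, he_one, mul_one]
    refine ⟨hmain, ?_⟩
    intro s hsS hsp
    have hsM : s ∈ M := hsimple_pos s hsS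
    obtain ⟨hw'M, ⟨d1, hd1M, hd1⟩, ⟨d2, hd2M, hd2⟩, _⟩ :=
      hwedge s hsM (p :: P).prod hprodM
    set w' := wedge s (p :: P).prod with hw'
    obtain ⟨cs, hcsS, hscs⟩ := hcompl s hsS
    have hw'δ : ∃ c ∈ M, w' * c = δ :=
      ⟨d1 * cs, M.mul_mem hd1M (hsimple_pos cs hcsS), by rw [← mul_assoc, hd1, hscs]⟩
    obtain ⟨_, _, _, hunivδ⟩ := hwedge δ hδM (p :: P).prod hprodM
    obtain ⟨g1, hg1M, hg1⟩ := hunivδ w' hw'M hw'δ ⟨d2, hd2M, hd2⟩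
    rw [hmain] at hg1
    obtain ⟨_, _, _, hunivsp⟩ := hwedge s hsM p hpM
    obtain ⟨g2, hg2M, hg2⟩ := hunivsp w' hw'M ⟨d1, hd1M, hd1⟩ ⟨g1, hg1M, hg1⟩
    rw [hsp] at hg2
    exact (hmul1 w' hw'M g2 hg2M hg2).1
  -- key lemma, by induction on the tail of the chain
  have key : ∀ P : List G, ∀ p : G, (∀ q ∈ p :: P, simple q) →
      List.Chain' (fun a b => wedge (a⁻¹ * δ) b = 1) (p :: P) →
      wedge δ (p :: P).prod = p ∧
      (∀ s : G, simple s → wedge s p = 1 → wedge s (p :: P).prod = 1) := by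
    intro P
    induction P with
    | nil =>
      intro p hsimp _
      refine step p [] (hsimp p (List.mem_cons_self)) (by simp) ?_
      intro e heM _ h2
      obtain ⟨c, hcM, hc⟩ := h2
      exact (hmul1 e heM c hcM (by simpa using hc)).1
    | cons p₂ P' ih =>
      intro p hsimp hchain
      have hpS : simple p := hsimp p (List.mem_cons_self)
      have htl : ∀ q ∈ p₂ :: P', simple q := fun q hq =>
        hsimp q (List.mem_cons_of_mem _ hq)
      have hch2 : wedge (p⁻¹ * δ) p₂ = 1 := (List.isChain_cons_cons.1 hchain).1
      obtain ⟨c, hcS, hpc⟩ := hcompl p hpS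
      have hcval : c = p⁻¹ * δ := by
        rw [← hpc, ← mul_assoc, inv_mul_cancel, one_mul]
      have hcM : p⁻¹ * δ ∈ M := hcval ▸ hsimple_pos c hcS
      have hw1 : wedge (p⁻¹ * δ) (p₂ :: P').prod = 1 :=
        (ih p₂ htl (List.isChain_cons_cons.1 hchain).2).2 (p⁻¹ * δ) (hcval ▸ hcS) hch2
      refine step p (p₂ :: P') hpS htl ?_
      intro e heM h1 h2
      obtain ⟨_, _, _, huniv'⟩ := hwedge (p⁻¹ * δ) hcM (p₂ :: P').prod
        (hsum _ (fun q hq => hsimple_pos q (htl q hq))).1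
      obtain ⟨f, hfM, hef⟩ := huniv' e heM h1 h2
      rw [hw1] at hef
      exact (hmul1 e heM f hfM hef).1
  -- main statement
  intro x
  obtain ⟨U, V, hUV, hchU, hchV, hwUV, hxUV, hlR⟩ := hR x
  have hUM : ∀ s ∈ U, s ∈ M := fun s hs =>
    hsimple_pos s (hUV s (List.mem_append_left _ hs)).1
  have hVM : ∀ s ∈ V, s ∈ M := fun s hs =>
    hsimple_pos s (hUV s (List.mem_append_right _ hs)).1
  obtain ⟨hUpM, hUsum⟩ := hsum U hUM
  obtain ⟨hVpM, hVsum⟩ := hsum V hVM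
  have hlRsum : ℓR x = minLen A U.prod + minLen A V.prod := by
    rw [hlR, List.map_append, List.sum_append, hUsum, hVsum]
  constructor
  · intro hxM
    constructor
    · -- greedy length
      obtain ⟨k, P, hPs, hPch, hxP, hlG⟩ := hG x
      have hPM : ∀ q ∈ P, q ∈ M := fun q hq => hsimple_pos q (hPs q hq).1
      obtain ⟨hPpM, hPsum⟩ := hsum P hPM
      rcases le_or_gt 0 k with hk | hk
      · -- k ≥ 0
        lift k to ℕ using hk with m
        rw [zpow_natCast] at hxP
        have hx' : minLen A x = m * minLen A δ + (P.map (minLen A)).sum := by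
          rw [hxP, hadd _ (M.pow_mem hδM m) _ hPpM, hpow, hPsum]
        rw [hlG, hx', Int.natAbs_natCast]
      · -- k < 0
        obtain ⟨m, hm⟩ : ∃ m, k.natAbs = m + 1 :=
          ⟨k.natAbs - 1, by omega⟩
        have hkval : k = -((m + 1 : ℕ) : ℤ) := by omega
        have hxP' : δ ^ (m + 1) * x = P.prod := by
          rw [hxP, hkval, zpow_neg, zpow_natCast, ← mul_assoc, mul_inv_cancel, one_mul]
        by_cases hδ0 : minLen A δ = 0
        · have hδ1 : δ = 1 := eq_one_of_minLen_zero hgen hδM hδ0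
          have hxPr : x = P.prod := by rw [hxP, hδ1, one_zpow, one_mul]
          rw [hlG, hδ0, hxPr, hPsum, Nat.mul_zero, Nat.zero_add]
        · exfalso
          cases P with
          | nil =>
            have h := hadd _ (M.pow_mem hδM (m + 1)) x hxM
            rw [hxP', List.prod_nil, minLen_one, hpow] at h
            have hpos : 0 < (m + 1) * minLen A δ := Nat.mul_pos (by omega) (by omega)
            omega
          | cons p P' =>
            have hkey := (key P' p (fun q hq => (hPs q hq).1) hPch).1
            have hprodM : (p :: P').prod ∈ M := hPpM
            obtain ⟨_, _, _, huniv⟩ := hwedge δ hδM (p :: P').prod hprodM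
            have hδdvd : ∃ c ∈ M, δ * c = (p :: P').prod :=
              ⟨δ ^ m * x, M.mul_mem (M.pow_mem hδM m) hxM, by
                rw [← mul_assoc, ← pow_succ', hxP']⟩
            obtain ⟨g, hgM, hg⟩ := huniv δ hδM ⟨1, M.one_mem, mul_one _⟩ hδdvd
            rw [hkey] at hg
            obtain ⟨c', hc'S, hpc'⟩ := hcompl p (hPs p (List.mem_cons_self)).1
            have hgc : g * c' = 1 := by
              have : δ * (g * c') = δ * 1 := by
                rw [← mul_assoc, hg, hpc', mul_one]
              exact mul_left_cancel this
            have hg1 : g = 1 := (hmul1 g hgM c' (hsimple_pos c' hc'S) hgc).1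
            exact (hPs p (List.mem_cons_self)).2.1 (by rw [← hg, hg1, mul_one])
    · -- rational length for positive x
      have hUdvd : U.prod * x = V.prod := by
        rw [hxUV, ← mul_assoc, mul_inv_cancel, one_mul]
      obtain ⟨_, _, _, huniv⟩ := hwedge U.prod hUpM V.prod hVpM
      obtain ⟨g, hgM, hg⟩ := huniv U.prod hUpM ⟨1, M.one_mem, mul_one _⟩ ⟨x, hxM, hUdvd⟩
      rw [hwUV] at hg
      have hU1 : U.prod = 1 := (hmul1 _ hUpM _ hgM hg).1
      have hxV : x = V.prod := by rw [hxUV, hU1, inv_one, one_mul]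
      rw [hlRsum, hU1, minLen_one, ← hxV, Nat.zero_add]
  · intro hxM
    have hVdvd : V.prod * x⁻¹ = U.prod := by
      rw [hxUV, mul_inv_rev, inv_inv, ← mul_assoc, mul_inv_cancel, one_mul]
    obtain ⟨_, _, _, huniv⟩ := hwedge U.prod hUpM V.prod hVpM
    obtain ⟨g, hgM, hg⟩ := huniv V.prod hVpM ⟨x⁻¹, hxM, hVdvd⟩ ⟨1, M.one_mem, mul_one _⟩
    rw [hwUV] at hg
    have hV1 : V.prod = 1 := (hmul1 _ hVpM _ hgM hg).1
    have hxU : x = U.prod⁻¹ := by rw [hxUV, hV1, mul_one]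
    rw [hlRsum, hV1, minLen_one, Nat.add_zero, ← minLen_inv x, hxU, inv_inv]
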